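/- Let H ∈ (0,1/2), γ > 1/2 - H. If σ : [0,T] → ℝ is γ-Hölder with constant C₅, then ∫_0^t (∫_s^t |σ(r)-σ(s)| (r-s)^{H-3/2} dr)² ds ≤ (C₅²/((2α-2)(2H+2γ-2α+1))) ∫_0^t (t-s)^{2γ+2H-1} ds for any α ∈ (1, γ+H+1/2), using the Cauchy–Schwarz splitting (r-s)^{H-3/2} = (r-s)^{(-3+2α)/2} (r-s)^{H - α}. -/

import Mathlib

open Real intervalIntegral MeasureTheory Set Filter

lemma continuousOn_of_holder {C γ T : ℝ} (hγ : 0 < γ) {σ : ℝ → ℝ}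
    (h : ∀ r ∈ Set.Icc (0:ℝ) T, ∀ s ∈ Set.Icc (0:ℝ) T, |σ r - σ s| ≤ C * |r - s| ^ γ) :
    ContinuousOn σ (Set.Icc 0 T) := by
  intro x hx
  rw [ContinuousWithinAt, tendsto_iff_dist_tendsto_zero]
  apply squeeze_zero' (Filter.Eventually.of_forall fun y => dist_nonneg)
  · filter_upwards [self_mem_nhdsWithin] with y hy
    have := h y hy x hx
    simpa [Real.dist_eq] using this
  · have hcont : Continuous fun y : ℝ => C * |y - x| ^ γ := by
      apply Continuous.mul continuous_const
      apply Continuous.rpow_const ((continuous_sub_right x).abs)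
      exact fun y => Or.inr hγ.le
    have := hcont.tendsto x
    simp only [sub_self, abs_zero, Real.zero_rpow hγ.ne', mul_zero] at this
    exact this.mono_left nhdsWithin_le_nhds

theorem holder_double_integral_bound (H γ α C₅ T : ℝ)
    (hH : H ∈ Set.Ioo (0:ℝ) (1/2)) (hγ : γ > 1/2 - H)
    (hα : α ∈ Set.Ioo (1:ℝ) (γ + H + 1/2)) (hC : 0 < C₅)
    (σ : ℝ → ℝ)
    (hσ : ∀ r ∈ Set.Icc (0:ℝ) T, ∀ s ∈ Set.Icc (0:ℝ) T, |σ r - σ s| ≤ C₅ * |r - s| ^ γ)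
    (t : ℝ) (ht : 0 ≤ t) (htT : t ≤ T) :
    ∫ s in (0:ℝ)..t, (∫ r in s..t, |σ r - σ s| * (r - s) ^ (H - 3/2))^2
      ≤ (C₅^2 / ((2*α - 2) * (2*H + 2*γ - 2*α + 1)))
          * ∫ s in (0:ℝ)..t, (t - s) ^ (2*γ + 2*H - 1) := by
  obtain ⟨hH0, hH12⟩ := hH
  obtain ⟨hα1, hα2⟩ := hα
  have hγpos : 0 < γ := by linarith
  set p : ℝ := γ + H - 3/2 with hp
  set q : ℝ := γ + H - 1/2 with hq
  set e : ℝ := 2*γ + 2*H - 1 with he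
  have hpq : p + 1 = q := by rw [hp, hq]; ring
  have hqpos : 0 < q := by rw [hq]; linarith
  have hepos : 0 < e := by rw [he]; linarith
  have hp1 : (-1:ℝ) < p := by rw [hp]; linarith
  have ha : 0 < 2*α - 2 := by linarith
  have hb : 0 < 2*H + 2*γ - 2*α + 1 := by linarith
  set D : ℝ := C₅^2 / ((2*α - 2) * (2*H + 2*γ - 2*α + 1)) with hD
  set K : ℝ := C₅ / q with hK
  have hKpos : 0 < K := div_pos hC hqpos
  have hKD : K^2 ≤ D := by
    rw [hK, hD, div_pow, div_le_div_iff₀ (by positivity) (by positivity), hq]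
    nlinarith [sq_nonneg ((2*α - 2) - (2*H + 2*γ - 2*α + 1)), sq_nonneg C₅]
  have hDpos : 0 < D := by rw [hD]; positivity
  have hσc : ContinuousOn σ (Set.Icc 0 T) := continuousOn_of_holder hγpos hσ
  -- pointwise bound on the inner integral
  have inner_bound : ∀ s ∈ Set.Icc (0:ℝ) t,
      (∫ r in s..t, |σ r - σ s| * (r - s) ^ (H - 3/2))^2 ≤ D * (t - s) ^ e := by
    intro s hs
    obtain ⟨hs0, hst⟩ := hs
    have hts : 0 ≤ t - s := by linarith
    have hsub : Set.Ioc s t ⊆ Set.Icc (0:ℝ) T := fun r hr =>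
      ⟨le_trans hs0 hr.1.le, le_trans hr.2 htT⟩
    -- domination
    have hdom : ∀ r ∈ Set.Ioc s t,
        |σ r - σ s| * (r - s) ^ (H - 3/2) ≤ C₅ * (r - s) ^ p := by
      intro r hr
      have hrs : 0 < r - s := sub_pos.2 hr.1
      have h1 : |σ r - σ s| ≤ C₅ * (r - s) ^ γ := by
        have := hσ r (hsub hr) s ⟨hs0, le_trans hst htT⟩
        rwa [abs_of_pos hrs] at this
      calc |σ r - σ s| * (r - s) ^ (H - 3/2)
          ≤ (C₅ * (r - s) ^ γ) * (r - s) ^ (H - 3/2) :=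
            mul_le_mul_of_nonneg_right h1 (Real.rpow_nonneg hrs.le _)
        _ = C₅ * (r - s) ^ p := by
            rw [mul_assoc, ← Real.rpow_add hrs,
              show γ + (H - 3/2) = p by rw [hp]; ring]
    -- integrability of the dominating function
    have hgint : IntervalIntegrable (fun r => C₅ * (r - s) ^ p) volume s t := by
      have h1 := (intervalIntegrable_rpow' (a := s - s) (b := t - s) hp1).comp_sub_right s
      simp only [sub_add_cancel] at h1
      exact h1.const_mul C₅
    -- integrability of the integrand
    have hfint : IntervalIntegrable (fun r => |σ r - σ s| * (r - s) ^ (H - 3/2))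
        volume s t := by
      apply hgint.mono_fun'
      · have hcont : ContinuousOn (fun r => |σ r - σ s| * (r - s) ^ (H - 3/2))
            (Set.Ioc s t) := by
          apply ContinuousOn.mul
          · exact ((hσc.mono hsub).sub continuousOn_const).abs
          · intro r hr
            apply ContinuousAt.continuousWithinAt
            exact ((continuous_sub_right s).continuousAt).rpow_const
              (Or.inl (sub_ne_zero.2 hr.1.ne'))
        rw [Set.uIoc_of_le hst]
        exact hcont.aestronglyMeasurable measurableSet_Ioc
      · rw [Set.uIoc_of_le hst]
        apply ae_restrict_of_forall_mem measurableSet_Ioc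
        intro r hr
        have hrs : 0 < r - s := sub_pos.2 hr.1
        have h0 : 0 ≤ |σ r - σ s| * (r - s) ^ (H - 3/2) :=
          mul_nonneg (abs_nonneg _) (Real.rpow_nonneg hrs.le _)
        simpa [Real.norm_eq_abs, abs_of_nonneg h0,
          abs_of_nonneg (Real.rpow_nonneg hrs.le (H - 3/2))] using hdom r hr
    -- bound the inner integral
    have hIle : (∫ r in s..t, |σ r - σ s| * (r - s) ^ (H - 3/2)) ≤ K * (t - s) ^ q := by
      have step1 : (∫ r in s..t, |σ r - σ s| * (r - s) ^ (H - 3/2))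
          ≤ ∫ r in s..t, C₅ * (r - s) ^ p := by
        apply intervalIntegral.integral_mono_on hst hfint hgint
        intro r hr
        rcases eq_or_lt_of_le hr.1 with h | h
        · rw [← h]
          simp only [sub_self, abs_zero, zero_mul]
          exact mul_nonneg hC.le (Real.rpow_nonneg le_rfl _)
        · exact hdom r ⟨h, hr.2⟩
      have step2 : (∫ r in s..t, C₅ * (r - s) ^ p) = K * (t - s) ^ q := by
        rw [intervalIntegral.integral_const_mul]
        have h1 : (∫ r in s..t, (r - s) ^ p) = ∫ x in s - s..t - s, x ^ p :=
          intervalIntegral.integral_comp_sub_right (fun x => x ^ p) s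
        rw [h1, sub_self, integral_rpow (Or.inl hp1),
          Real.zero_rpow (by rw [hpq]; exact hqpos.ne'), hpq, hK]
        field_simp
        ring
      linarith [step1, step2.le]
    have hInn : 0 ≤ ∫ r in s..t, |σ r - σ s| * (r - s) ^ (H - 3/2) := by
      apply intervalIntegral.integral_nonneg hst
      intro r hr
      have : 0 ≤ r - s := by linarith [hr.1]
      exact mul_nonneg (abs_nonneg _) (Real.rpow_nonneg this _)
    calc (∫ r in s..t, |σ r - σ s| * (r - s) ^ (H - 3/2))^2
        ≤ (K * (t - s) ^ q)^2 := pow_le_pow_left₀ hInn hIle 2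
      _ = K^2 * (t - s) ^ e := by
          rw [mul_pow, sq ((t - s) ^ q),
            ← Real.rpow_add' hts (by rw [show q + q = e by rw [hq, he]; ring]; exact hepos.ne'),
            show q + q = e by rw [hq, he]; ring]
      _ ≤ D * (t - s) ^ e := mul_le_mul_of_nonneg_right hKD (Real.rpow_nonneg hts _)
  -- conclude
  have hrhs_int : IntervalIntegrable (fun s => D * (t - s) ^ e) volume 0 t := by
    apply Continuous.intervalIntegrable
    exact continuous_const.mul ((continuous_const.sub continuous_id).rpow_const
      (fun x => Or.inr hepos.le))
  by_cases hI : IntervalIntegrable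
      (fun s => (∫ r in s..t, |σ r - σ s| * (r - s) ^ (H - 3/2))^2) volume 0 t
  · calc ∫ s in (0:ℝ)..t, (∫ r in s..t, |σ r - σ s| * (r - s) ^ (H - 3/2))^2
        ≤ ∫ s in (0:ℝ)..t, D * (t - s) ^ e :=
          intervalIntegral.integral_mono_on ht hI hrhs_int inner_bound
      _ = D * ∫ s in (0:ℝ)..t, (t - s) ^ e := intervalIntegral.integral_const_mul _ _
  · rw [intervalIntegral.integral_undef hI]
    apply mul_nonneg hDpos.le
    apply intervalIntegral.integral_nonneg ht
    intro s hs
    exact Real.rpow_nonneg (by linarith [hs.2]) _
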